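/- Let G = (U,α,φ_G) and H = (V,β,φ_H) be weighted labeled graphs with augmented label functions ψ_G(u) = (φ_G(u), m_G(u)) and ψ_H(v) = (φ_H(v), m_H(v)) given by the primary labels together with the multiweight labels, and let c_Ψ(u,v) = 1 if ψ_G(u) ≠ ψ_H(v) and 0 otherwise. Suppose γ ∈ J(α,β) satisfies ⟨c_Ψ, r_γ⟩ = 0, and suppose there exist u₀ ∈ U and v₀ ∈ V with r_γ(u₀,v₀) = p(u₀) = q(v₀) and N_G(u₀) ∩ L(G) ≠ ∅. Then there exists a bijection σ : N_G(u₀) ∩ L(G) → N_H(v₀) ∩ L(H) such that γ((u₀,v₀),(u,σ(u))) > 0 for every u ∈ N_G(u₀) ∩ L(G). -/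
import Mathlib
open Finset

def IsWeightFunction {U : Type*} [Fintype U] (α : U → U → ℝ) : Prop :=
  (∀ u u', 0 ≤ α u u') ∧ (∀ u u', α u u' = α u' u) ∧ (∑ u, ∑ u', α u u' = 1)

noncomputable def marginal {U : Type*} [Fintype U] (α : U → U → ℝ) (u : U) : ℝ :=
  ∑ u', α u u'

def IsWeightJoining {U V : Type*} [Fintype U] [Fintype V]
    (α : U → U → ℝ) (β : V → V → ℝ) (γ : U × V → U × V → ℝ) : Prop :=
  IsWeightFunction γ ∧
  (∀ u, ∑ v, marginal γ (u, v) = marginal α u) ∧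
  (∀ v, ∑ u, marginal γ (u, v) = marginal β v) ∧
  (∀ u u' v, marginal α u * ∑ v', γ (u, v) (u', v') = α u u' * marginal γ (u, v)) ∧
  (∀ v v' u, marginal β v * ∑ u', γ (u, v) (u', v') = β v v' * marginal γ (u, v))

def weightJoinings {U V : Type*} [Fintype U] [Fintype V]
    (α : U → U → ℝ) (β : V → V → ℝ) : Set (U × V → U × V → ℝ) :=
  {γ | IsWeightJoining α β γ}

noncomputable def ogjCost {U V : Type*} [Fintype U] [Fintype V]
    (c : U → V → ℝ) (γ : U × V → U × V → ℝ) : ℝ :=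
  ∑ p : U × V, c p.1 p.2 * marginal γ p

open Classical in
/-- The 0-1 label-agreement cost function induced by label functions. -/
noncomputable def labelCost {U V A : Type*} (ψG : U → A) (ψH : V → A) : U → V → ℝ :=
  fun u v => if ψG u = ψH v then 0 else 1

/-- The multiweight label of a vertex `u`: the multiset of weights of the
positive-weight edges incident to `u`. -/
noncomputable def multiweight {U : Type*} [Fintype U] (α : U → U → ℝ) (u : U) : Multiset ℝ :=
  (Finset.univ.val.map fun u' => α u u').filter fun x => 0 < x

/-- A vertex `u` is a leaf if there is exactly one vertex `u'` with `α(u,u') > 0`,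
and moreover `u' ≠ u`. -/
def IsLeaf {U : Type*} (α : U → U → ℝ) (u : U) : Prop :=
  ∃ u', u' ≠ u ∧ 0 < α u u' ∧ ∀ u'', 0 < α u u'' → u'' = u'

open Classical in
lemma multiweight_singleton {W : Type*} [Fintype W] (δ : W → W → ℝ) (w w₀ : W)
    (h₁ : 0 < δ w w₀) (h₂ : ∀ x, 0 < δ w x → x = w₀) :
    multiweight δ w = {δ w w₀} := by
  classical
  unfold multiweight
  have huniv : (univ : Finset W).val = w₀ ::ₘ (univ.erase w₀).val := by
    conv_lhs => rw [← Finset.insert_erase (mem_univ w₀)]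
    rw [Finset.insert_val_of_notMem (by simp)]
  rw [huniv, Multiset.map_cons, Multiset.filter_cons_of_pos _ h₁]
  have : Multiset.filter (fun x => 0 < x) (((univ.erase w₀).val).map fun u' => δ w u') = 0 := by
    rw [Multiset.filter_eq_nil]
    intro a ha
    obtain ⟨x, hx, rfl⟩ := Multiset.mem_map.mp ha
    intro hpos
    exact (Finset.mem_erase.mp hx).1 (h₂ x hpos)
  rw [this]
  rfl

open Classical in
lemma multiweight_card {W : Type*} [Fintype W] (δ : W → W → ℝ) (w : W) :
    Multiset.card (multiweight δ w) = (univ.filter fun x => 0 < δ w x).card := by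
  classical
  unfold multiweight
  rw [← Multiset.countP_eq_card_filter, Multiset.countP_map]
  rfl

lemma mem_multiweight {W : Type*} [Fintype W] (δ : W → W → ℝ) (w x : W) (h : 0 < δ w x) :
    δ w x ∈ multiweight δ w := by
  unfold multiweight
  rw [Multiset.mem_filter]
  exact ⟨Multiset.mem_map.mpr ⟨x, Finset.mem_univ_val x, rfl⟩, h⟩

/-- From a singleton multiweight: unique positive neighbor with that weight. -/
lemma multiweight_singleton_unique {W : Type*} [Fintype W] (δ : W → W → ℝ) (w : W) (c : ℝ)
    (h : multiweight δ w = {c}) :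
    ∃ x, 0 < δ w x ∧ (∀ y, 0 < δ w y → y = x) := by
  classical
  have hcard : (univ.filter fun x => 0 < δ w x).card = 1 := by
    rw [← multiweight_card, h]; rfl
  obtain ⟨x, hx⟩ := Finset.card_eq_one.mp hcard
  refine ⟨x, ?_, ?_⟩
  · have : x ∈ univ.filter fun y => 0 < δ w y := by rw [hx]; exact Finset.mem_singleton_self x
    exact (Finset.mem_filter.mp this).2
  · intro y hy
    have : y ∈ univ.filter fun y => 0 < δ w y := Finset.mem_filter.mpr ⟨mem_univ y, hy⟩
    rw [hx] at this
    exact Finset.mem_singleton.mp this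

theorem leaf_alignment
    {U V L : Type*} [Fintype U] [Fintype V]
    (α : U → U → ℝ) (β : V → V → ℝ)
    (hα : IsWeightFunction α) (hβ : IsWeightFunction β)
    (φG : U → L) (φH : V → L)
    (γ : U × V → U × V → ℝ) (hγ : γ ∈ weightJoinings α β)
    (hcost : ogjCost (labelCost (fun u => (φG u, multiweight α u))
      (fun v => (φH v, multiweight β v))) γ = 0)
    (u₀ : U) (v₀ : V)
    (hmarg₁ : marginal γ (u₀, v₀) = marginal α u₀)
    (hmarg₂ : marginal γ (u₀, v₀) = marginal β v₀)
    (hleafnbr : ∃ u : U, 0 < α u₀ u ∧ IsLeaf α u) :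
    ∃ σ : U → V,
      Set.BijOn σ {u : U | 0 < α u₀ u ∧ IsLeaf α u}
        {v : V | 0 < β v₀ v ∧ IsLeaf β v} ∧
      ∀ u : U, 0 < α u₀ u → IsLeaf α u → 0 < γ (u₀, v₀) (u, σ u) := by
  classical
  obtain ⟨⟨hγ0, hγsymm, -⟩, hrowm, hcolm, htα, htβ⟩ := hγ
  obtain ⟨hα0, hαsymm, -⟩ := hα
  obtain ⟨hβ0, hβsymm, -⟩ := hβ
  -- nonnegativity of marginals
  have hr0 : ∀ x : U × V, 0 ≤ marginal γ x := fun x =>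
    Finset.sum_nonneg fun y _ => hγ0 x y
  -- positivity of p(u₀)
  have hp0 : 0 < marginal α u₀ := by
    obtain ⟨u₁, hu₁, -⟩ := hleafnbr
    exact lt_of_lt_of_le hu₁ (Finset.single_le_sum (fun u' _ => hα0 u₀ u') (mem_univ u₁))
  have hq0 : 0 < marginal β v₀ := by rw [← hmarg₂, hmarg₁]; exact hp0
  -- row sums of γ from (u₀,v₀)
  have hL1 : ∀ u', ∑ v, γ (u₀, v₀) (u', v) = α u₀ u' := by
    intro u'
    have h := htα u₀ u' v₀
    rw [hmarg₁] at h
    have h2 : marginal α u₀ * ∑ v', γ (u₀, v₀) (u', v') = marginal α u₀ * α u₀ u' := by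
      rw [h]; ring
    exact mul_left_cancel₀ (ne_of_gt hp0) h2
  have hL2 : ∀ v', ∑ u, γ (u₀, v₀) (u, v') = β v₀ v' := by
    intro v'
    have h := htβ v₀ v' u₀
    rw [hmarg₂] at h
    have h2 : marginal β v₀ * ∑ u', γ (u₀, v₀) (u', v') = marginal β v₀ * β v₀ v' := by
      rw [h]; ring
    exact mul_left_cancel₀ (ne_of_gt hq0) h2
  -- γ entry bounded by target marginal
  have hle : ∀ u v, γ (u₀, v₀) (u, v) ≤ marginal γ (u, v) := by
    intro u v
    calc γ (u₀, v₀) (u, v) = γ (u, v) (u₀, v₀) := hγsymm _ _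
    _ ≤ marginal γ (u, v) :=
      Finset.single_le_sum (fun y _ => hγ0 (u, v) y) (mem_univ (u₀, v₀))
  -- zero cost
  have hzc : ∀ u v, 0 < marginal γ (u, v) →
      (φG u, multiweight α u) = (φH v, multiweight β v) := by
    intro u v hpos
    by_contra hne
    have hterm : ∀ x : U × V, x ∈ (univ : Finset (U × V)) →
        0 ≤ labelCost (fun u => (φG u, multiweight α u)) (fun v => (φH v, multiweight β v))
          x.1 x.2 * marginal γ x := by
      intro x _
      apply mul_nonneg _ (hr0 x)
      unfold labelCost
      split <;> norm_num
    have h0 := (Finset.sum_eq_zero_iff_of_nonneg hterm).mp hcost (u, v) (mem_univ _)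
    unfold labelCost at h0
    rw [if_neg hne] at h0
    simp at h0
    exact (ne_of_gt hpos) h0
  -- vanishing of off-diagonal marginals in the row/column of (u₀, v₀)
  have hru0 : ∀ v, v ≠ v₀ → marginal γ (u₀, v) = 0 := by
    intro v hv
    have hsum : ∑ v', marginal γ (u₀, v') = marginal γ (u₀, v₀) := by
      rw [hrowm u₀, hmarg₁]
    have h2 : ∑ v' ∈ univ.erase v₀, marginal γ (u₀, v') = 0 := by
      have := Finset.sum_erase_add univ (fun v' => marginal γ (u₀, v')) (mem_univ v₀)
      linarith [this.trans hsum]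
    exact (Finset.sum_eq_zero_iff_of_nonneg (fun v' _ => hr0 (u₀, v'))).mp h2 v
      (Finset.mem_erase.mpr ⟨hv, mem_univ v⟩)
  have hrv0 : ∀ u, u ≠ u₀ → marginal γ (u, v₀) = 0 := by
    intro u hu
    have hsum : ∑ u', marginal γ (u', v₀) = marginal γ (u₀, v₀) := by
      rw [hcolm v₀, hmarg₂]
    have h2 : ∑ u' ∈ univ.erase u₀, marginal γ (u', v₀) = 0 := by
      have := Finset.sum_erase_add univ (fun u' => marginal γ (u', v₀)) (mem_univ u₀)
      linarith [this.trans hsum]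
    exact (Finset.sum_eq_zero_iff_of_nonneg (fun u' _ => hr0 (u', v₀))).mp h2 u
      (Finset.mem_erase.mpr ⟨hu, mem_univ u⟩)
  -- structure of leaf neighbors of u₀
  have hSstruct : ∀ u, 0 < α u₀ u → IsLeaf α u →
      u ≠ u₀ ∧ 0 < α u u₀ ∧ (∀ x, 0 < α u x → x = u₀) := by
    intro u hu ⟨u', hne, hpos, huniq⟩
    have hu0 : 0 < α u u₀ := by rw [hαsymm]; exact hu
    have h1 : u₀ = u' := huniq u₀ hu0
    subst h1
    exact ⟨hne.symm, hu0, huniq⟩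
  have hTstruct : ∀ v, 0 < β v₀ v → IsLeaf β v →
      v ≠ v₀ ∧ 0 < β v v₀ ∧ (∀ x, 0 < β v x → x = v₀) := by
    intro v hv ⟨v', hne, hpos, huniq⟩
    have hv0 : 0 < β v v₀ := by rw [hβsymm]; exact hv
    have h1 : v₀ = v' := huniq v₀ hv0
    subst h1
    exact ⟨hne.symm, hv0, huniq⟩
  -- key correspondence
  have hkey : ∀ u, 0 < α u₀ u → IsLeaf α u → ∀ v, 0 < γ (u₀, v₀) (u, v) →
      0 < β v₀ v ∧ IsLeaf β v ∧ β v₀ v = α u₀ u := by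
    intro u hu hleaf v hγpos
    obtain ⟨hune, huu₀, huniq⟩ := hSstruct u hu hleaf
    have hβpos : 0 < β v₀ v := by
      rw [← hL2 v]
      exact lt_of_lt_of_le hγpos
        (Finset.single_le_sum (f := fun x => γ (u₀, v₀) (x, v)) (fun x _ => hγ0 _ _)
          (mem_univ u))
    have hvne : v ≠ v₀ := by
      intro h
      have h1 := hrv0 u hune
      have h2 := hle u v₀
      rw [h] at hγpos
      linarith
    have hrpos : 0 < marginal γ (u, v) := lt_of_lt_of_le hγpos (hle u v)
    have heq := hzc u v hrpos
    have hmu : multiweight α u = {α u u₀} := multiweight_singleton α u u₀ huu₀ huniq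
    have hmv : multiweight β v = {α u u₀} := by
      have h2 : multiweight α u = multiweight β v := congrArg Prod.snd heq
      rw [← h2, hmu]
    obtain ⟨x, hxpos, hxuniq⟩ := multiweight_singleton_unique β v (α u u₀) hmv
    have hvv₀ : 0 < β v v₀ := by rw [hβsymm]; exact hβpos
    have hx : x = v₀ := (hxuniq v₀ hvv₀).symm
    rw [hx] at hxpos hxuniq
    refine ⟨hβpos, ⟨v₀, Ne.symm hvne, hxpos, hxuniq⟩, ?_⟩
    have hmem : β v v₀ ∈ multiweight β v := mem_multiweight β v v₀ hvv₀
    rw [hmv, Multiset.mem_singleton] at hmem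
    rw [hβsymm v₀ v, hmem, hαsymm u u₀]
  have hkey' : ∀ v, 0 < β v₀ v → IsLeaf β v → ∀ u, 0 < γ (u₀, v₀) (u, v) →
      0 < α u₀ u ∧ IsLeaf α u ∧ α u₀ u = β v₀ v := by
    intro v hv hleaf u hγpos
    obtain ⟨hvne, hvv₀, hvuniq⟩ := hTstruct v hv hleaf
    have hαpos : 0 < α u₀ u := by
      rw [← hL1 u]
      exact lt_of_lt_of_le hγpos
        (Finset.single_le_sum (f := fun x => γ (u₀, v₀) (u, x)) (fun x _ => hγ0 _ _)
          (mem_univ v))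
    have hune : u ≠ u₀ := by
      intro h
      have h1 := hru0 v hvne
      have h2 := hle u₀ v
      rw [h] at hγpos
      linarith
    have hrpos : 0 < marginal γ (u, v) := lt_of_lt_of_le hγpos (hle u v)
    have heq := hzc u v hrpos
    have hmv : multiweight β v = {β v v₀} := multiweight_singleton β v v₀ hvv₀ hvuniq
    have hmu : multiweight α u = {β v v₀} := by
      have h2 : multiweight α u = multiweight β v := congrArg Prod.snd heq
      rw [h2, hmv]
    obtain ⟨x, hxpos, hxuniq⟩ := multiweight_singleton_unique α u (β v v₀) hmu
    have huu₀ : 0 < α u u₀ := by rw [hαsymm]; exact hαpos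
    have hx : x = u₀ := (hxuniq u₀ huu₀).symm
    rw [hx] at hxpos hxuniq
    refine ⟨hαpos, ⟨u₀, Ne.symm hune, hxpos, hxuniq⟩, ?_⟩
    have hmem : α u u₀ ∈ multiweight α u := mem_multiweight α u u₀ huu₀
    rw [hmu, Multiset.mem_singleton] at hmem
    rw [hαsymm u₀ u, hmem, hβsymm v v₀]
  -- the normalized matrix
  set S : Finset U := univ.filter fun u => 0 < α u₀ u ∧ IsLeaf α u with hSdef
  set T : Finset V := univ.filter fun v => 0 < β v₀ v ∧ IsLeaf β v with hTdef
  set M : U → V → ℝ := fun u v => γ (u₀, v₀) (u, v) / β v₀ v with hMdef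
  have hM0 : ∀ u v, 0 ≤ M u v := fun u v => div_nonneg (hγ0 _ _) (hβ0 _ _)
  have hMpos : ∀ u v, 0 < M u v ↔ 0 < γ (u₀, v₀) (u, v) := by
    intro u v
    constructor
    · intro h
      rcases lt_or_eq_of_le (hγ0 (u₀, v₀) (u, v)) with h' | h'
      · exact h'
      · exfalso; rw [hMdef] at h; simp only [← h', zero_div] at h; exact lt_irrefl 0 h
    · intro h
      have hβpos : 0 < β v₀ v := by
        rw [← hL2 v]
        exact lt_of_lt_of_le h
          (Finset.single_le_sum (f := fun x => γ (u₀, v₀) (x, v)) (fun x _ => hγ0 _ _)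
            (mem_univ u))
      exact div_pos h hβpos
  have hcolsum : ∀ v, 0 < β v₀ v → ∑ u, M u v = 1 := by
    intro v hv
    rw [hMdef]
    rw [← Finset.sum_div, hL2 v, div_self (ne_of_gt hv)]
  have hrowsum : ∀ u, u ∈ S → ∑ v, M u v = 1 := by
    intro u hu
    rw [hSdef, Finset.mem_filter] at hu
    obtain ⟨-, hupos, huleaf⟩ := hu
    have : ∀ v, M u v = γ (u₀, v₀) (u, v) / α u₀ u := by
      intro v
      rcases lt_or_eq_of_le (hγ0 (u₀, v₀) (u, v)) with h' | h'
      · obtain ⟨-, -, heq⟩ := hkey u hupos huleaf v h'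
        rw [hMdef]; simp only []; rw [heq]
      · rw [hMdef]; simp only [← h', zero_div]
    rw [Finset.sum_congr rfl fun v _ => this v, ← Finset.sum_div, hL1 u,
      div_self (ne_of_gt hupos)]
  -- membership transfer
  have hmemT : ∀ u, u ∈ S → ∀ v, 0 < γ (u₀, v₀) (u, v) → v ∈ T := by
    intro u hu v hγpos
    rw [hSdef, Finset.mem_filter] at hu
    obtain ⟨hv1, hv2, -⟩ := hkey u hu.2.1 hu.2.2 v hγpos
    rw [hTdef, Finset.mem_filter]
    exact ⟨mem_univ v, hv1, hv2⟩
  have hmemS : ∀ v, v ∈ T → ∀ u, 0 < γ (u₀, v₀) (u, v) → u ∈ S := by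
    intro v hv u hγpos
    rw [hTdef, Finset.mem_filter] at hv
    obtain ⟨hu1, hu2, -⟩ := hkey' v hv.2.1 hv.2.2 u hγpos
    rw [hSdef, Finset.mem_filter]
    exact ⟨mem_univ u, hu1, hu2⟩
  -- Hall's condition
  set t : {x // x ∈ S} → Finset V := fun u => T.filter fun v => 0 < γ (u₀, v₀) (u.1, v)
    with htdef
  have hall : ∀ s : Finset {x // x ∈ S}, s.card ≤ (s.biUnion t).card := by
    intro s
    set B := s.biUnion t with hBdef
    have hrowB : ∀ u ∈ s, ∑ v ∈ B, M u.1 v = 1 := by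
      intro u hu
      rw [← hrowsum u.1 u.2]
      apply Finset.sum_subset (Finset.subset_univ B)
      intro v _ hvB
      by_contra hne
      have hMp : 0 < M u.1 v := lt_of_le_of_ne (hM0 u.1 v) (Ne.symm hne)
      have hγp := (hMpos u.1 v).mp hMp
      have hvt : v ∈ t u := by
        rw [htdef]
        exact Finset.mem_filter.mpr ⟨hmemT u.1 u.2 v hγp, hγp⟩
      exact hvB (Finset.mem_biUnion.mpr ⟨u, hu, hvt⟩)
    have hcolB : ∀ v ∈ B, ∑ u ∈ s, M u.1 v ≤ 1 := by
      intro v hvB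
      have hvT : v ∈ T := by
        obtain ⟨u, -, hvt⟩ := Finset.mem_biUnion.mp hvB
        rw [htdef] at hvt
        exact (Finset.mem_filter.mp hvt).1
      have hβpos : 0 < β v₀ v := by
        rw [hTdef, Finset.mem_filter] at hvT
        exact hvT.2.1
      calc ∑ u ∈ s, M u.1 v = ∑ u ∈ s.image Subtype.val, M u v := by
            rw [Finset.sum_image (fun x _ y _ h => Subtype.ext h)]
      _ ≤ ∑ u, M u v := Finset.sum_le_sum_of_subset_of_nonneg (Finset.subset_univ _)
            (fun u _ _ => hM0 u v)
      _ = 1 := hcolsum v hβpos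
    have hcast : (s.card : ℝ) ≤ (B.card : ℝ) := by
      calc (s.card : ℝ) = ∑ u ∈ s, (1 : ℝ) := by simp
      _ = ∑ u ∈ s, ∑ v ∈ B, M u.1 v := Finset.sum_congr rfl fun u hu => (hrowB u hu).symm
      _ = ∑ v ∈ B, ∑ u ∈ s, M u.1 v := Finset.sum_comm
      _ ≤ ∑ v ∈ B, (1 : ℝ) := Finset.sum_le_sum hcolB
      _ = (B.card : ℝ) := by simp
    exact_mod_cast hcast
  obtain ⟨f, hfinj, hft⟩ :=
    (Finset.all_card_le_biUnion_card_iff_existsInjective' t).mp hall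
  -- |S| = |T|
  have hST : S.card = T.card := by
    have hcast : (S.card : ℝ) = (T.card : ℝ) := by
      calc (S.card : ℝ) = ∑ u ∈ S, (1 : ℝ) := by simp
      _ = ∑ u ∈ S, ∑ v, M u v := Finset.sum_congr rfl fun u hu => (hrowsum u hu).symm
      _ = ∑ v, ∑ u ∈ S, M u v := Finset.sum_comm
      _ = ∑ v ∈ T, ∑ u ∈ S, M u v := by
          symm
          apply Finset.sum_subset (Finset.subset_univ T)
          intro v _ hvT
          apply Finset.sum_eq_zero
          intro u hu
          by_contra hne
          have hMp : 0 < M u v := lt_of_le_of_ne (hM0 u v) (Ne.symm hne)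
          exact hvT (hmemT u hu v ((hMpos u v).mp hMp))
      _ = ∑ v ∈ T, ∑ u, M u v := by
          apply Finset.sum_congr rfl
          intro v hvT
          apply Finset.sum_subset (Finset.subset_univ S)
          intro u _ huS
          by_contra hne
          have hMp : 0 < M u v := lt_of_le_of_ne (hM0 u v) (Ne.symm hne)
          exact huS (hmemS v hvT u ((hMpos u v).mp hMp))
      _ = ∑ v ∈ T, (1 : ℝ) := by
          apply Finset.sum_congr rfl
          intro v hvT
          rw [hTdef, Finset.mem_filter] at hvT
          exact hcolsum v hvT.2.1
      _ = (T.card : ℝ) := by simp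
    exact_mod_cast hcast
  -- the bijection
  set σ : U → V := fun u => if h : u ∈ S then f ⟨u, h⟩ else v₀ with hσdef
  have hσS : ∀ u (h : u ∈ S), σ u = f ⟨u, h⟩ := fun u h => dif_pos h
  have hσmem : ∀ u (h : u ∈ S), σ u ∈ T ∧ 0 < γ (u₀, v₀) (u, σ u) := by
    intro u h
    have := hft ⟨u, h⟩
    rw [htdef] at this
    rw [hσS u h]
    exact ⟨(Finset.mem_filter.mp this).1, (Finset.mem_filter.mp this).2⟩
  have hsetS : {u : U | 0 < α u₀ u ∧ IsLeaf α u} = ↑S := by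
    ext u; simp [hSdef]
  have hsetT : {v : V | 0 < β v₀ v ∧ IsLeaf β v} = ↑T := by
    ext v; simp [hTdef]
  have hinjS : Set.InjOn σ ↑S := by
    intro u hu u' hu' heq
    rw [Finset.mem_coe] at hu hu'
    rw [hσS u hu, hσS u' hu'] at heq
    have := hfinj heq
    exact congrArg Subtype.val this
  refine ⟨σ, ?_, ?_⟩
  · rw [hsetS, hsetT]
    refine ⟨?_, hinjS, ?_⟩
    · intro u hu
      rw [Finset.mem_coe] at hu
      exact Finset.mem_coe.mpr (hσmem u hu).1
    · -- surjectivity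
      intro v hv
      rw [Finset.mem_coe] at hv
      have himg : S.image σ = T := by
        apply Finset.eq_of_subset_of_card_le
        · intro v' hv'
          obtain ⟨u, hu, rfl⟩ := Finset.mem_image.mp hv'
          exact (hσmem u hu).1
        · rw [Finset.card_image_of_injOn hinjS, hST]
      rw [← himg] at hv
      obtain ⟨u, hu, huv⟩ := Finset.mem_image.mp hv
      exact ⟨u, Finset.mem_coe.mpr hu, huv⟩
  · intro u hu1 hu2
    have huS : u ∈ S := by rw [hSdef, Finset.mem_filter]; exact ⟨mem_univ u, hu1, hu2⟩
    exact (hσmem u huS).2
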